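/- Composition of correlation constraints (Theorem 1): if Hermitian operators A ∈ L_A and B ∈ L_B have correlation types contained in sets A and B of binary strings respectively, then the composed operator A * B := (1/d_{S*}) Tr_{S*}[A^{T_{S*}} B] lies in L_{A*B}, where A*B := {a + b : a ∈ A, b ∈ B, (a+b) restricted to the composed systems S* is the all-zero string}. Equivalently, L_A * L_B ⊆ L_{A*B} for S* ⊇ S_A ∩ S_B. -/
import Mathlib


open Matrix BigOperators ComplexOrder

variable {ι : Type} [Fintype ι] [DecidableEq ι]

/-- Joint index of the multipartite Hilbert space `⊗_s ℂ^{d s}`. -/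
abbrev JIdx (d : ι → ℕ) := ∀ s, Fin (d s)

/-- Operators on the multipartite Hilbert space. -/
abbrev MOp (d : ι → ℕ) := Matrix (JIdx d) (JIdx d) ℂ

/-- Override the coordinates of `x` inside `S` by `z`. -/
def override (d : ι → ℕ) (S : Finset ι) (x : JIdx d) (z : ∀ s : S, Fin (d s)) : JIdx d :=
  fun s => if h : s ∈ S then z ⟨s, h⟩ else x s

/-- Partial transpose on the systems in `S` (in the standard basis). -/
def ptranspose (d : ι → ℕ) (S : Finset ι) (A : MOp d) : MOp d :=
  fun x y => A (fun s => if s ∈ S then y s else x s) (fun s => if s ∈ S then x s else y s)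

/-- The link product `A * B = (1/d_{S}) Tr_S[A^{T_S} B]` composing on the systems `S`,
with the result extended by the identity on `S` (systems are never discarded here). -/
noncomputable def link (d : ι → ℕ) (S : Finset ι) (A B : MOp d) : MOp d :=
  fun x y =>
    (if ∀ s ∈ S, x s = y s then (1 : ℂ) else 0) * (∏ s ∈ S, (d s : ℂ))⁻¹ *
      ∑ z : ∀ s : S, Fin (d s),
        (ptranspose d S A * B) (override d S x z) (override d S y z)

/-- Pure tensor-product operator from single-system operators. -/
def pureTensor (d : ι → ℕ) (M : ∀ s, Matrix (Fin (d s)) (Fin (d s)) ℂ) : MOp d :=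
  fun x y => ∏ s, M s (x s) (y s)

/-- The type subspace `L_a` of a binary string `a`: the real span of pure tensors
whose factor on system `s` is traceless Hermitian if `a s = 1` and a real multiple
of the identity if `a s = 0`. -/
noncomputable def Lstr (d : ι → ℕ) (a : ι → Bool) : Submodule ℝ (MOp d) :=
  Submodule.span ℝ
    { T | ∃ M : ∀ s, Matrix (Fin (d s)) (Fin (d s)) ℂ,
        (∀ s, if a s then (M s).IsHermitian ∧ (M s).trace = 0
              else ∃ r : ℝ, M s = (r : ℂ) • 1) ∧
        T = pureTensor d M }

/-- Correlation type elements: binary strings over the systems (`some a`)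
together with the special element `û` (`none`). -/
abbrev CTElem (ι : Type) := Option (ι → Bool)

/-- The set of operators of a single correlation type element: `L_û = {0, Id}`
(the only `u`-type term allowed is the fixed term `Id`), `L_{some a} = L_a`. -/
def Lel (d : ι → ℕ) : CTElem ι → Set (MOp d)
  | none => {0, 1}
  | some a => (Lstr d a : Set (MOp d))

/-- `L_A`: operators whose correlation type expansion only has components of
types belonging to `A`. -/
def LA (d : ι → ℕ) (A : Set (CTElem ι)) : Set (MOp d) :=
  { M | ∃ f : CTElem ι → MOp d,
      (∀ t, f t ∈ Lel d t) ∧ (∀ t ∉ A, f t = 0) ∧ M = ∑ t, f t }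

/-- `𝒞_A`: the positive semidefinite operators obeying the constraint `A`. -/
def CA (d : ι → ℕ) (A : Set (CTElem ι)) : Set (MOp d) :=
  { M | M ∈ LA d A ∧ M.PosSemidef }

/-- Addition of correlation type elements: XOR on strings, `û` a two-sided unit. -/
def ctadd : CTElem ι → CTElem ι → CTElem ι
  | none, b => b
  | some a, none => some a
  | some a, some b => some (fun s => xor (a s) (b s))

/-- The restriction of a type element to the systems `S` is trivial (`u` or `û`). -/
def restrTrivial (S : Finset ι) : CTElem ι → Prop
  | none => True
  | some c => ∀ s ∈ S, c s = false

/-- Composition of correlation constraints on the systems `S`: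
`A * B = {a + b : a ∈ A, b ∈ B, (a+b)|_S ∈ {u, û}}`. -/
def ctstar (S : Finset ι) (A B : Set (CTElem ι)) : Set (CTElem ι) :=
  { c | ∃ a ∈ A, ∃ b ∈ B, restrTrivial S (ctadd a b) ∧ c = ctadd a b }

/-- Support of a correlation type element. -/
def suppT : CTElem ι → Set ι
  | none => ∅
  | some a => { s | a s = true }

/-- Support of a set of correlation type elements. -/
def suppSet (A : Set (CTElem ι)) : Set ι := ⋃ t ∈ A, suppT t

/-- `A → B := {c : A * c ⊆ B}` (composition on the systems `S`). -/
def ctarrow (S : Finset ι) (A B : Set (CTElem ι)) : Set (CTElem ι) :=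
  { c | ctstar S A {c} ⊆ B }

set_option linter.unusedSectionVars false

section AuxLink
variable (d : ι → ℕ) (S : Finset ι)

lemma link_add_left (A A' B : MOp d) :
    link d S (A + A') B = link d S A B + link d S A' B := by
  funext x y
  simp only [link, ptranspose, Matrix.mul_apply, Matrix.add_apply, Pi.add_apply, add_mul,
    Finset.sum_add_distrib]
  ring

lemma link_smul_left (c : ℂ) (A B : MOp d) :
    link d S (c • A) B = c • link d S A B := by
  funext x y
  simp only [link, ptranspose, Matrix.mul_apply, Matrix.smul_apply, Pi.smul_apply,
    smul_eq_mul, mul_assoc, ← Finset.mul_sum]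
  ring

lemma link_add_right (A B B' : MOp d) :
    link d S A (B + B') = link d S A B + link d S A B' := by
  funext x y
  simp only [link, ptranspose, Matrix.mul_apply, Matrix.add_apply, Pi.add_apply, mul_add,
    Finset.sum_add_distrib]

lemma link_smul_right (c : ℂ) (A B : MOp d) :
    link d S A (c • B) = c • link d S A B := by
  funext x y
  simp only [link, ptranspose, Matrix.mul_apply, Matrix.smul_apply, Pi.smul_apply,
    smul_eq_mul, show ∀ a b : ℂ, a * (c * b) = c * (a * b) from fun a b => by ring,
    ← Finset.mul_sum]

end AuxLink

lemma sum_pi_prod {ι' : Type} [Fintype ι'] [DecidableEq ι'] {β : ι' → Type}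
    [∀ i, Fintype (β i)] (f : ∀ i, β i → ℂ) :
    ∑ w : ∀ i, β i, ∏ i, f i (w i) = ∏ i, ∑ j, f i j := (Fintype.prod_sum f).symm

section PT
variable (d : ι → ℕ) (S : Finset ι)

lemma link_pureTensor (M N : ∀ s, Matrix (Fin (d s)) (Fin (d s)) ℂ) :
    link d S (pureTensor d M) (pureTensor d N) =
      (∏ s ∈ S, ((d s : ℂ)⁻¹ * ((M s)ᵀ * N s).trace)) •
        pureTensor d (fun s => if s ∈ S then 1 else M s * N s) := by
  funext x y
  simp only [link, ptranspose, Matrix.mul_apply, pureTensor, override, Matrix.smul_apply,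
    smul_eq_mul, ← Finset.prod_mul_distrib]
  have hw : ∀ z : (∀ s : S, Fin (d s)),
      (∑ w : JIdx d, ∏ s, M s (if s ∈ S then w s else if h : s ∈ S then z ⟨s, h⟩ else x s)
          (if s ∈ S then if h : s ∈ S then z ⟨s, h⟩ else x s else w s) *
          N s (w s) (if h : s ∈ S then z ⟨s, h⟩ else y s)) =
      ∏ s, if h : s ∈ S then ((M s)ᵀ * N s) (z ⟨s, h⟩) (z ⟨s, h⟩)
           else (M s * N s) (x s) (y s) := by
    intro z
    rw [sum_pi_prod (fun s j => M s (if s ∈ S then j else if h : s ∈ S then z ⟨s, h⟩ else x s)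
          (if s ∈ S then if h : s ∈ S then z ⟨s, h⟩ else x s else j) *
          N s j (if h : s ∈ S then z ⟨s, h⟩ else y s))]
    refine Finset.prod_congr rfl fun s _ => ?_
    by_cases h : s ∈ S <;>
      simp [h, Matrix.mul_apply, Matrix.transpose_apply]
  simp only [hw]
  have hz : ∀ z : (∀ s : S, Fin (d s)),
      (∏ s, if h : s ∈ S then ((M s)ᵀ * N s) (z ⟨s, h⟩) (z ⟨s, h⟩)
            else (M s * N s) (x s) (y s)) =
      (∏ s : {t // t ∈ S}, ((M s.1)ᵀ * N s.1) (z s) (z s)) *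
        ∏ s ∈ Sᶜ, (M s * N s) (x s) (y s) := by
    intro z
    rw [← Finset.prod_mul_prod_compl S]
    congr 1
    · exact Finset.prod_dite_of_true (fun i hi => hi) _ _
    · exact Finset.prod_congr rfl fun s hs => dif_neg (Finset.mem_compl.mp hs)
  simp only [hz, ← Finset.sum_mul]
  rw [sum_pi_prod (fun (s : {t // t ∈ S}) (j : Fin (d s.1)) => ((M s.1)ᵀ * N s.1) j j)]
  have htr : ∀ s : {t // t ∈ S}, (∑ j, ((M s.1)ᵀ * N s.1) j j) = ((M s.1)ᵀ * N s.1).trace :=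
    fun s => rfl
  simp only [htr]
  have hR : (∏ s, (if s ∈ S then (1 : Matrix (Fin (d s)) (Fin (d s)) ℂ) else M s * N s)
        (x s) (y s)) =
      (if ∀ s ∈ S, x s = y s then (1 : ℂ) else 0) * ∏ s ∈ Sᶜ, (M s * N s) (x s) (y s) := by
    rw [← Finset.prod_mul_prod_compl S]
    congr 1
    · rw [Finset.prod_congr rfl fun s hs => by rw [if_pos hs, Matrix.one_apply],
        Finset.prod_boole]
      congr!
    · exact Finset.prod_congr rfl fun s hs => by rw [if_neg (Finset.mem_compl.mp hs)]
  rw [hR, Finset.prod_coe_sort (f := fun s => ((M s)ᵀ * N s).trace),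
    Finset.prod_mul_distrib, Finset.prod_inv_distrib]
  ring

end PT

noncomputable def linkBil (d : ι → ℕ) (S : Finset ι) : MOp d →ₗ[ℂ] MOp d →ₗ[ℂ] MOp d :=
  LinearMap.mk₂ ℂ (link d S) (link_add_left d S) (link_smul_left d S)
    (link_add_right d S) (link_smul_right d S)

section More
variable (d : ι → ℕ) (S : Finset ι)

lemma link_zero_left (B : MOp d) : link d S 0 B = 0 := by
  simpa using link_smul_left d S 0 0 B

lemma link_zero_right (A : MOp d) : link d S A 0 = 0 := by
  simpa using link_smul_right d S 0 A 0

lemma real_smul_eq (r : ℝ) (A : MOp d) : r • A = ((r : ℂ)) • A := by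
  rw [← algebraMap_smul ℂ r A]
  norm_num

lemma link_rsmul_left (r : ℝ) (A B : MOp d) :
    link d S (r • A) B = r • link d S A B := by
  rw [real_smul_eq, link_smul_left, ← real_smul_eq]

lemma link_rsmul_right (r : ℝ) (A B : MOp d) :
    link d S A (r • B) = r • link d S A B := by
  rw [real_smul_eq, link_smul_right, ← real_smul_eq]

lemma pureTensor_one :
    pureTensor d (fun s => (1 : Matrix (Fin (d s)) (Fin (d s)) ℂ)) = (1 : MOp d) := by
  funext x y
  simp [pureTensor, Matrix.one_apply, Finset.prod_boole, funext_iff]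

lemma link_one_one_mem : link d S (1 : MOp d) 1 ∈ ({0, 1} : Set (MOp d)) := by
  by_cases hd : ∀ s ∈ S, d s ≠ 0
  · right
    rw [← pureTensor_one d, link_pureTensor]
    have h1 : (∏ s ∈ S, ((d s : ℂ)⁻¹ *
        (((1 : Matrix (Fin (d s)) (Fin (d s)) ℂ))ᵀ * 1).trace)) = 1 := by
      refine Finset.prod_eq_one fun s hs => ?_
      simp only [Matrix.transpose_one, Matrix.one_mul, Matrix.trace_one, Fintype.card_fin,
        nsmul_eq_mul, mul_one]
      exact inv_mul_cancel₀ (Nat.cast_ne_zero.mpr (hd s hs))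
    have h2 : (fun s => if s ∈ S then (1 : Matrix (Fin (d s)) (Fin (d s)) ℂ) else 1 * 1) =
        fun s => (1 : Matrix (Fin (d s)) (Fin (d s)) ℂ) := by
      funext s; split <;> simp
    rw [h1, one_smul, h2, pureTensor_one]
    exact rfl
  · left
    push_neg at hd
    obtain ⟨s₀, hs₀, h0⟩ := hd
    have hempty : IsEmpty (JIdx d) := ⟨fun w => (Fin.cast h0 (w s₀)).elim0⟩
    funext i j
    exact (hempty.elim i)

end More

section STR
variable (d : ι → ℕ) (S : Finset ι)

lemma link_vanish (a b : ι → Bool) {x y : MOp d}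
    (hx : x ∈ Lstr d a) (hy : y ∈ Lstr d b)
    (hnt : ∃ s ∈ S, a s ≠ b s) : link d S x y = 0 := by
  obtain ⟨s₀, hs₀, hne⟩ := hnt
  induction hx using Submodule.span_induction with
  | zero => exact link_zero_left d S y
  | add u v hu hv hu' hv' => rw [link_add_left, hu', hv', add_zero]
  | smul r u hu hu' => rw [link_rsmul_left, hu', smul_zero]
  | mem u hu =>
    obtain ⟨M, hM, rfl⟩ := hu
    induction hy using Submodule.span_induction with
    | zero => exact link_zero_right d S _
    | add u v hu hv hu' hv' => rw [link_add_right, hu', hv', add_zero]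
    | smul r u hu hu' => rw [link_rsmul_right, hu', smul_zero]
    | mem v hv =>
      obtain ⟨N, hN, rfl⟩ := hv
      rw [link_pureTensor]
      refine smul_eq_zero_of_left (Finset.prod_eq_zero hs₀ ?_) _
      have htr : ((M s₀)ᵀ * N s₀).trace = 0 := by
        cases ha : a s₀ with
        | false =>
          have hb : b s₀ = true := by revert hne; rw [ha]; cases b s₀ <;> simp
          obtain ⟨r, hr⟩ : ∃ r : ℝ, M s₀ = (r : ℂ) • 1 := by simpa [ha] using hM s₀
          have hN1 : (N s₀).IsHermitian ∧ (N s₀).trace = 0 := by simpa [hb] using hN s₀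
          rw [hr, Matrix.transpose_smul, Matrix.transpose_one, Matrix.smul_mul, Matrix.one_mul,
            Matrix.trace_smul, hN1.2, smul_zero]
        | true =>
          have hb : b s₀ = false := by revert hne; rw [ha]; cases b s₀ <;> simp
          obtain ⟨r, hr⟩ : ∃ r : ℝ, N s₀ = (r : ℂ) • 1 := by simpa [hb] using hN s₀
          have hM1 : (M s₀).IsHermitian ∧ (M s₀).trace = 0 := by simpa [ha] using hM s₀
          rw [hr, Matrix.mul_smul, Matrix.mul_one, Matrix.trace_smul, Matrix.trace_transpose,
            hM1.2, smul_zero]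
      rw [htr, mul_zero]

lemma link_mem_Lstr (a b : ι → Bool) (hab : ∀ s, a s = true → b s = true → s ∈ S)
    (htriv : ∀ s ∈ S, a s = b s) {x y : MOp d}
    (hx : x ∈ Lstr d a) (hy : y ∈ Lstr d b) :
    link d S x y ∈ Lstr d (fun s => xor (a s) (b s)) := by
  induction hx using Submodule.span_induction with
  | zero => rw [link_zero_left]; exact Submodule.zero_mem _
  | add u v hu hv hu' hv' => rw [link_add_left]; exact Submodule.add_mem _ hu' hv'
  | smul r u hu hu' => rw [link_rsmul_left]; exact Submodule.smul_mem _ _ hu'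
  | mem u hu =>
    obtain ⟨M, hM, rfl⟩ := hu
    induction hy using Submodule.span_induction with
    | zero => rw [link_zero_right]; exact Submodule.zero_mem _
    | add u v hu hv hu' hv' => rw [link_add_right]; exact Submodule.add_mem _ hu' hv'
    | smul r u hu hu' => rw [link_rsmul_right]; exact Submodule.smul_mem _ _ hu'
    | mem v hv =>
      obtain ⟨N, hN, rfl⟩ := hv
      rw [link_pureTensor]
      have hPT : pureTensor d (fun s => if s ∈ S then 1 else M s * N s) ∈
          Lstr d (fun s => xor (a s) (b s)) := by
        refine Submodule.subset_span ⟨_, fun s => ?_, rfl⟩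
        by_cases hsS : s ∈ S
        · have hx0 : xor (a s) (b s) = false := by rw [htriv s hsS, Bool.xor_self]
          simp only [hx0, if_pos hsS, Bool.false_eq_true, if_false]
          exact ⟨1, by norm_num⟩
        · rw [if_neg hsS]
          cases ha : a s with
          | false =>
            cases hb : b s with
            | false =>
              obtain ⟨r, hr⟩ : ∃ r : ℝ, M s = (r : ℂ) • 1 := by simpa [ha] using hM s
              obtain ⟨r', hr'⟩ : ∃ r' : ℝ, N s = (r' : ℂ) • 1 := by simpa [hb] using hN s
              simp only [ha, hb, Bool.xor_self, Bool.false_eq_true, if_false]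
              refine ⟨r * r', ?_⟩
              rw [hr, hr', Matrix.smul_mul, Matrix.mul_smul, Matrix.one_mul, smul_smul]
              push_cast
              ring_nf
            | true =>
              have hN1 : (N s).IsHermitian ∧ (N s).trace = 0 := by simpa [hb] using hN s
              obtain ⟨r, hr⟩ : ∃ r : ℝ, M s = (r : ℂ) • 1 := by simpa [ha] using hM s
              simp only [ha, hb, Bool.false_xor, if_true]
              rw [hr, Matrix.smul_mul, Matrix.one_mul]
              constructor
              · show ((r : ℂ) • N s)ᴴ = (r : ℂ) • N s
                rw [Matrix.conjTranspose_smul, hN1.1]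
                norm_num
              · rw [Matrix.trace_smul, hN1.2, smul_zero]
          | true =>
            cases hb : b s with
            | false =>
              have hM1 : (M s).IsHermitian ∧ (M s).trace = 0 := by simpa [ha] using hM s
              obtain ⟨r, hr⟩ : ∃ r : ℝ, N s = (r : ℂ) • 1 := by simpa [hb] using hN s
              simp only [ha, hb, Bool.xor_false, if_true]
              rw [hr, Matrix.mul_smul, Matrix.mul_one]
              constructor
              · show ((r : ℂ) • M s)ᴴ = (r : ℂ) • M s
                rw [Matrix.conjTranspose_smul, hM1.1]
                norm_num
              · rw [Matrix.trace_smul, hM1.2, smul_zero]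
            | true => exact absurd (hab s ha hb) hsS
      have hreal : ∃ r : ℝ, (∏ s ∈ S, ((d s : ℂ)⁻¹ * ((M s)ᵀ * N s).trace)) = (r : ℂ) := by
        have hconj : (starRingEnd ℂ) (∏ s ∈ S, ((d s : ℂ)⁻¹ * ((M s)ᵀ * N s).trace)) =
            ∏ s ∈ S, ((d s : ℂ)⁻¹ * ((M s)ᵀ * N s).trace) := by
          rw [map_prod]
          refine Finset.prod_congr rfl fun s hs => ?_
          rw [_root_.map_mul]
          congr 1
          · simp
          · cases ha : a s with
            | false =>
              have hb : b s = false := by rw [← htriv s hs, ha]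
              obtain ⟨r, hr⟩ : ∃ r : ℝ, M s = (r : ℂ) • 1 := by simpa [ha] using hM s
              obtain ⟨r', hr'⟩ : ∃ r' : ℝ, N s = (r' : ℂ) • 1 := by simpa [hb] using hN s
              rw [hr, hr', Matrix.transpose_smul, Matrix.transpose_one, Matrix.smul_mul,
                Matrix.mul_smul, Matrix.one_mul, Matrix.trace_smul, Matrix.trace_smul,
                Matrix.trace_one]
              simp [Complex.conj_ofReal]
            | true =>
              have hb : b s = true := by rw [← htriv s hs, ha]
              have hM1 : (M s).IsHermitian ∧ (M s).trace = 0 := by simpa [ha] using hM s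
              have hN1 : (N s).IsHermitian ∧ (N s).trace = 0 := by simpa [hb] using hN s
              calc (starRingEnd ℂ) ((M s)ᵀ * N s).trace
                  = (((M s)ᵀ * N s)ᴴ).trace := by
                    rw [Matrix.trace_conjTranspose]; rfl
                _ = ((N s)ᴴ * ((M s)ᵀ)ᴴ).trace := by rw [Matrix.conjTranspose_mul]
                _ = (N s * (M s)ᵀ).trace := by rw [hN1.1, hM1.1.transpose]
                _ = ((M s)ᵀ * N s).trace := Matrix.trace_mul_comm _ _
        exact ⟨_, (Complex.conj_eq_iff_re.mp hconj).symm⟩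
      obtain ⟨r, hr⟩ := hreal
      rw [hr, ← real_smul_eq]
      exact Submodule.smul_mem _ _ hPT

end STR

section MainAux
variable (d : ι → ℕ) (S : Finset ι)

/-- The string of a type element (`û` maps to the all-zero string). -/
def strOf (t : CTElem ι) : ι → Bool := t.getD (fun _ => false)

lemma one_mem_Lstr : (1 : MOp d) ∈ Lstr d (fun _ => false) := by
  refine Submodule.subset_span ⟨fun s => 1, fun s => ?_, (pureTensor_one d).symm⟩
  have : ∃ r : ℝ, (1 : Matrix (Fin (d s)) (Fin (d s)) ℂ) = (r : ℂ) • 1 := ⟨1, by norm_num⟩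
  simpa using this

lemma Lel_subset (t : CTElem ι) : Lel d t ⊆ (Lstr d (strOf t) : Set (MOp d)) := by
  cases t with
  | none =>
    intro m hm
    simp only [Lel, Set.mem_insert_iff, Set.mem_singleton_iff] at hm
    rcases hm with rfl | rfl
    · exact Submodule.zero_mem _
    · exact one_mem_Lstr d
  | some a => exact fun m hm => hm

lemma strOf_ctadd (t t' : CTElem ι) :
    strOf (ctadd t t') = fun s => xor (strOf t s) (strOf t' s) := by
  cases t <;> cases t' <;> funext s <;> simp [strOf, ctadd]

lemma restrTrivial_iff (t : CTElem ι) :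
    restrTrivial S t ↔ ∀ s ∈ S, strOf t s = false := by
  cases t <;> simp [restrTrivial, strOf]

lemma mem_suppT_of_strOf {t : CTElem ι} {s : ι} (h : strOf t s = true) : s ∈ suppT t := by
  cases t with
  | none => simp [strOf] at h
  | some a => exact h

lemma ctadd_eq_none_iff (t t' : CTElem ι) : ctadd t t' = none ↔ t = none ∧ t' = none := by
  cases t <;> cases t' <;> simp [ctadd]

lemma link_sum_sum {κ₁ κ₂ : Type} [Fintype κ₁] [Fintype κ₂] (F : κ₁ → MOp d) (G : κ₂ → MOp d) :
    link d S (∑ i, F i) (∑ j, G j) = ∑ p : κ₁ × κ₂, link d S (F p.1) (G p.2) := by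
  have h1 : link d S (∑ i, F i) (∑ j, G j) = ∑ i, link d S (F i) (∑ j, G j) :=
    map_sum ((linkBil d S).flip (∑ j, G j)) F Finset.univ
  rw [h1, Fintype.sum_prod_type (f := fun p : κ₁ × κ₂ => link d S (F p.1) (G p.2))]
  exact Finset.sum_congr rfl fun i _ => map_sum (linkBil d S (F i)) G Finset.univ

end MainAux

/-- Theorem 1: composing operators of correlation types `A` and `B`
on systems `S ⊇ S_A ∩ S_B` with the link product yields an operator of type
`A * B = {a + b : a ∈ A, b ∈ B, (a+b)|_S ∈ {u,û}}`, i.e. `L_A * L_B ⊆ L_{A*B}`. -/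
theorem link_type_subset (d : ι → ℕ) (S : Finset ι) (A B : Set (CTElem ι))
    (hS : suppSet A ∩ suppSet B ⊆ (S : Set ι)) :
    ∀ MA ∈ LA d A, ∀ MB ∈ LA d B, link d S MA MB ∈ LA d (ctstar S A B) := by
  classical
  rintro MA ⟨f, hf, hf0, rfl⟩ MB ⟨g, hg, hg0, rfl⟩
  have key0 : ∀ p : CTElem ι × CTElem ι, ¬ restrTrivial S (ctadd p.1 p.2) →
      link d S (f p.1) (g p.2) = 0 := by
    intro p hnt
    refine link_vanish d S (strOf p.1) (strOf p.2)
      (Lel_subset d p.1 (hf p.1)) (Lel_subset d p.2 (hg p.2)) ?_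
    rw [restrTrivial_iff S, strOf_ctadd] at hnt
    push_neg at hnt
    obtain ⟨s, hsS, hxor⟩ := hnt
    refine ⟨s, hsS, fun hEq => hxor ?_⟩
    rw [hEq, Bool.xor_self]
  have keym : ∀ p : CTElem ι × CTElem ι, p.1 ∈ A → p.2 ∈ B →
      restrTrivial S (ctadd p.1 p.2) →
      link d S (f p.1) (g p.2) ∈ Lstr d (strOf (ctadd p.1 p.2)) := by
    intro p hA hB htr
    rw [strOf_ctadd]
    refine link_mem_Lstr d S _ _ (fun s h1 h2 => ?_) (fun s hsS => ?_)
      (Lel_subset d p.1 (hf p.1)) (Lel_subset d p.2 (hg p.2))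
    · exact hS ⟨Set.mem_biUnion hA (mem_suppT_of_strOf h1),
        Set.mem_biUnion hB (mem_suppT_of_strOf h2)⟩
    · have hx := (restrTrivial_iff S _).mp htr s hsS
      rw [strOf_ctadd] at hx
      cases hu : strOf p.1 s <;> cases hv : strOf p.2 s <;> simp_all
  refine ⟨fun c => if restrTrivial S c then
      ∑ p ∈ Finset.univ.filter (fun p : CTElem ι × CTElem ι => ctadd p.1 p.2 = c),
        link d S (f p.1) (g p.2) else 0, ?_, ?_, ?_⟩
  · intro c
    beta_reduce
    by_cases htr : restrTrivial S c
    · rw [if_pos htr]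
      cases c with
      | none =>
        have hfil : Finset.univ.filter (fun p : CTElem ι × CTElem ι => ctadd p.1 p.2 = none) =
            {((none : CTElem ι), (none : CTElem ι))} := by
          ext p
          simp [Finset.mem_filter, Finset.mem_singleton, ctadd_eq_none_iff, Prod.ext_iff]
        rw [hfil, Finset.sum_singleton]
        have hfm := hf none; have hgm := hg none
        simp only [Lel, Set.mem_insert_iff, Set.mem_singleton_iff] at hfm hgm ⊢
        rcases hfm with h | h
        · left; rw [h, link_zero_left]
        · rcases hgm with h' | h'
          · left; rw [h', link_zero_right]
          · rw [h, h']
            simpa [Set.mem_insert_iff, Set.mem_singleton_iff] using link_one_one_mem d S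
      | some c0 =>
        show _ ∈ (Lstr d c0 : Set (MOp d))
        refine Submodule.sum_mem _ fun p hp => ?_
        rw [Finset.mem_filter] at hp
        by_cases hA : p.1 ∈ A
        · by_cases hB : p.2 ∈ B
          · have h := keym p hA hB (by rw [hp.2]; exact htr)
            rw [hp.2] at h
            exact h
          · rw [hg0 p.2 hB, link_zero_right]; exact Submodule.zero_mem _
        · rw [hf0 p.1 hA, link_zero_left]; exact Submodule.zero_mem _
    · rw [if_neg htr]
      cases c with
      | none => exact Or.inl rfl
      | some c0 => exact Submodule.zero_mem _
  · intro c hc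
    beta_reduce
    by_cases htr : restrTrivial S c
    · rw [if_pos htr]
      refine Finset.sum_eq_zero fun p hp => ?_
      rw [Finset.mem_filter] at hp
      by_cases hA : p.1 ∈ A
      · by_cases hB : p.2 ∈ B
        · exact absurd ⟨p.1, hA, p.2, hB, by rw [hp.2]; exact htr, hp.2.symm⟩ hc
        · rw [hg0 p.2 hB, link_zero_right]
      · rw [hf0 p.1 hA, link_zero_left]
    · exact if_neg htr
  · rw [link_sum_sum,
      ← Finset.sum_fiberwise Finset.univ (fun p : CTElem ι × CTElem ι => ctadd p.1 p.2)
        (fun p => link d S (f p.1) (g p.2))]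
    refine Finset.sum_congr rfl fun c _ => ?_
    beta_reduce
    by_cases htr : restrTrivial S c
    · rw [if_pos htr]
    · rw [if_neg htr]
      exact Finset.sum_eq_zero fun p hp =>
        key0 p (by rw [(Finset.mem_filter.mp hp).2]; exact htr)
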